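/- Let θ ∈ ℝ, ν > 0, and let 𝐔₁^{θ,ν} = (U₁, V₁, W₁) be the first basis function. Then Im(W₁(0) · conj(V₁(0))) = 0, and for all N > 0: ν ∫_0^N (|U₁(x)|² + |V₁(x)|²) dx = −Im(W₁(N) · conj(V₁(N))). In particular Im(W₁(N) · conj(V₁(N))) < 0 for every N > 0, and W₁(N) · conj(V₁(N)) does not converge to 0 as N → ∞; hence the first basis function does not decay to zero at infinity. -/

import Mathlib

open Complex

lemma norm_sq_eq_mul_conj (u : ℂ) : ((‖u‖:ℝ)^2 : ℂ) = u * (starRingEnd ℂ) u := by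
  rw [Complex.mul_conj]; norm_cast
  rw [Complex.normSq_eq_norm_sq]

lemma key_alg (a d ν θ : ℝ) (u v w : ℂ)
    (h : I*(θ:ℂ)*w - ((a:ℂ)+I*(ν:ℂ))*u - I*(d:ℂ)*v = 0) :
    ((I*(d:ℂ)*u - ((a:ℂ)+I*(ν:ℂ))*v) * (starRingEnd ℂ) v
      + w * (starRingEnd ℂ) (w + I*(θ:ℂ)*u)).im
      = -(ν*(‖u‖^2+‖v‖^2)) := by
  have h2 := congrArg (starRingEnd ℂ) h
  simp only [map_sub, map_mul, map_add, map_neg, Complex.conj_I, Complex.conj_ofReal,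
    map_zero] at h2
  set E : ℂ := (I*(d:ℂ)*u - ((a:ℂ)+I*(ν:ℂ))*v) * (starRingEnd ℂ) v
      + w * (starRingEnd ℂ) (w + I*(θ:ℂ)*u) with hE
  have hu := norm_sq_eq_mul_conj u
  have hv := norm_sq_eq_mul_conj v
  have hkey : E - (starRingEnd ℂ) E = 2 * (↑(-(ν*(‖u‖^2+‖v‖^2))) : ℝ) * I := by
    rw [hE]
    push_cast
    simp only [map_add, map_sub, map_mul, map_neg, Complex.conj_I, Complex.conj_ofReal,
      Complex.conj_conj]
    linear_combination (-(starRingEnd ℂ) u) * h + u * h2 + (2*I*(ν:ℂ)) * hu + (2*I*(ν:ℂ))*hv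
  have him := congrArg Complex.im hkey
  rw [Complex.sub_conj] at him
  simp only [Complex.mul_im, Complex.mul_re, Complex.I_re, Complex.I_im, Complex.ofReal_re,
    Complex.ofReal_im, mul_zero, zero_mul, mul_one, zero_add, sub_zero, zero_sub,
    Complex.conj_im, Complex.conj_re] at him
  norm_num at him ⊢
  linarith


/-- The first basis function does not decay at infinity (Proposition 5.5 of the
paper): `Im(W₁(0) conj(V₁(0))) = 0`, the energy identity from `0` gives
`ν ∫_0^N (|U₁|² + |V₁|²) = −Im(W₁(N) conj(V₁(N)))`, which is strictly positive,
and `W₁(N) conj(V₁(N))` does not converge to `0` as `N → ∞`. -/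
theorem first_basis_function_does_not_decay
    (L θ ν : ℝ) (hL : 0 < L) (hν : 0 < ν)
    (α δ : ℝ → ℝ)
    (hα : ContDiffOn ℝ 2 α (Set.Ici (-L)))
    (hαbd : ∃ C, ∀ x, -L ≤ x → |α x| ≤ C)
    (hα0 : α 0 = 0)
    (hδ : ContDiffOn ℝ 1 δ (Set.Ici (-L)))
    (hδbd : ∃ C, ∀ x, -L ≤ x → |δ x| ≤ C)
    (hδ0 : δ 0 ≠ 0)
    -- the first basis function 𝐔₁^{θ,ν}
    (U₁ V₁ W₁ : ℝ → ℂ)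
    (hVd : ∀ x, -L ≤ x → HasDerivAt V₁ (W₁ x + Complex.I * (θ : ℂ) * U₁ x) x)
    (halg : ∀ x, -L ≤ x →
      Complex.I * (θ : ℂ) * W₁ x - ((α x : ℂ) + Complex.I * (ν : ℂ)) * U₁ x
        - Complex.I * (δ x : ℂ) * V₁ x = 0)
    (hWd : ∀ x, -L ≤ x → HasDerivAt W₁
      (Complex.I * (δ x : ℂ) * U₁ x - ((α x : ℂ) + Complex.I * (ν : ℂ)) * V₁ x) x)
    (hV0 : V₁ 0 = Complex.I * (θ : ℂ)) (hW0 : W₁ 0 = Complex.I * (δ 0 : ℂ)) :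
    (W₁ 0 * (starRingEnd ℂ) (V₁ 0)).im = 0
    ∧ (∀ N : ℝ, 0 < N →
        ν * ∫ x in (0:ℝ)..N, (‖U₁ x‖^2 + ‖V₁ x‖^2)
          = -(W₁ N * (starRingEnd ℂ) (V₁ N)).im)
    ∧ (∀ N : ℝ, 0 < N → (W₁ N * (starRingEnd ℂ) (V₁ N)).im < 0)
    ∧ ¬ Filter.Tendsto (fun N => W₁ N * (starRingEnd ℂ) (V₁ N))
        Filter.atTop (nhds 0) := by
  set F : ℝ → ℝ := fun x => (W₁ x * (starRingEnd ℂ) (V₁ x)).im with hFdef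
  set g : ℝ → ℝ := fun x => ‖U₁ x‖^2 + ‖V₁ x‖^2 with hgdef
  have hgnn : ∀ x, 0 ≤ g x := fun x => by positivity
  -- derivative of F
  have hF : ∀ x, -L ≤ x → HasDerivAt F (-(ν * g x)) x := by
    intro x hx
    have hconj : HasDerivAt (fun y => (starRingEnd ℂ) (V₁ y))
        ((starRingEnd ℂ) (W₁ x + Complex.I * (θ:ℂ) * U₁ x)) x := (hVd x hx).star
    have hprod := (hWd x hx).mul hconj
    have h2 := Complex.imCLM.hasFDerivAt.comp_hasDerivAt x hprod
    have h3 : HasDerivAt F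
        (((Complex.I * (δ x : ℂ) * U₁ x - ((α x : ℂ) + Complex.I * (ν:ℂ)) * V₁ x)
            * (starRingEnd ℂ) (V₁ x)
          + W₁ x * (starRingEnd ℂ) (W₁ x + Complex.I * (θ:ℂ) * U₁ x)).im) x := h2
    rwa [key_alg (α x) (δ x) ν θ (U₁ x) (V₁ x) (W₁ x) (halg x hx)] at h3
  -- continuity of U₁ at points > -L
  have hden : ∀ x : ℝ, ((α x : ℂ) + Complex.I * (ν:ℂ)) ≠ 0 := by
    intro x hc
    have := congrArg Complex.im hc
    simp at this
    exact hν.ne' this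
  have hU : ∀ x, -L ≤ x →
      U₁ x = (Complex.I*(θ:ℂ)*W₁ x - Complex.I*(δ x:ℂ)*V₁ x) / ((α x:ℂ) + Complex.I*(ν:ℂ)) := by
    intro x hx
    rw [eq_div_iff (hden x)]
    linear_combination - halg x hx
  have hUc : ∀ x, -L < x → ContinuousAt U₁ x := by
    intro x hx
    have hmem : Set.Ici (-L) ∈ nhds x :=
      Filter.mem_of_superset (Ioi_mem_nhds hx) Set.Ioi_subset_Ici_self
    have hαc : ContinuousAt α x := (hα.continuousOn.continuousAt hmem)
    have hδc : ContinuousAt δ x := (hδ.continuousOn.continuousAt hmem)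
    have hWc : ContinuousAt W₁ x := (hWd x hx.le).continuousAt
    have hVc : ContinuousAt V₁ x := (hVd x hx.le).continuousAt
    have hform : ContinuousAt
        (fun y => (Complex.I*(θ:ℂ)*W₁ y - Complex.I*(δ y:ℂ)*V₁ y)
            / ((α y:ℂ) + Complex.I*(ν:ℂ))) x := by
      apply ContinuousAt.div
      · exact ((continuousAt_const.mul hWc)).sub
          ((continuousAt_const.mul (Complex.continuous_ofReal.continuousAt.comp hδc)).mul hVc)
      · exact (Complex.continuous_ofReal.continuousAt.comp hαc).add continuousAt_const
      · exact hden x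
    apply hform.congr
    filter_upwards [Ioi_mem_nhds hx] with y hy
    exact (hU y (le_of_lt hy)).symm
  have hgc : ∀ x, -L < x → ContinuousAt g x := by
    intro x hx
    exact (((hUc x hx).norm.pow 2).add (((hVd x hx.le).continuousAt).norm.pow 2))
  have hgint : ∀ a b : ℝ, 0 ≤ a → 0 ≤ b → IntervalIntegrable g MeasureTheory.volume a b := by
    intro a b ha hb
    apply ContinuousOn.intervalIntegrable
    intro x hx
    have hx0 : 0 ≤ x := by
      rcases Set.mem_uIcc.mp hx with h | h
      · exact le_trans ha h.1
      · exact le_trans hb h.1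
    exact (hgc x (by linarith)).continuousWithinAt
  -- F 0 = 0
  have hF0 : F 0 = 0 := by
    simp only [hFdef, hW0, hV0, map_mul, Complex.conj_I, Complex.conj_ofReal]
    simp [Complex.mul_im, Complex.mul_re]
  -- energy identity
  have energy : ∀ N : ℝ, 0 < N → ν * ∫ x in (0:ℝ)..N, g x = -(F N) := by
    intro N hN
    have hFTC : ∫ x in (0:ℝ)..N, (-(ν * g x)) = F N - F 0 := by
      apply intervalIntegral.integral_eq_sub_of_hasDerivAt
      · intro x hx
        rw [Set.uIcc_of_le hN.le] at hx
        exact hF x (by linarith [hx.1])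
      · exact ((hgint 0 N le_rfl hN.le).const_mul ν).neg
    rw [hF0, sub_zero, intervalIntegral.integral_neg, intervalIntegral.integral_const_mul] at hFTC
    linarith
  -- strict positivity of the energy
  have hpos : ∀ N : ℝ, 0 < N → 0 < ∫ x in (0:ℝ)..N, g x := by
    intro N hN
    rw [intervalIntegral.integral_pos_iff_support_of_nonneg_ae
      (Filter.Eventually.of_forall hgnn) (hgint 0 N le_rfl hN.le)]
    refine ⟨hN, ?_⟩
    -- find a point where g is positive
    have hx0 : ∃ x₀ ∈ Set.Ioo (0:ℝ) N, 0 < g x₀ := by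
      by_contra hcon
      push_neg at hcon
      have hzero : ∀ x ∈ Set.Ioo (0:ℝ) N, U₁ x = 0 ∧ V₁ x = 0 := by
        intro x hx
        have h0 : ‖U₁ x‖^2 + ‖V₁ x‖^2 = 0 := le_antisymm (hcon x hx) (hgnn x)
        have hU0 : ‖U₁ x‖^2 = 0 := by nlinarith [sq_nonneg ‖U₁ x‖, sq_nonneg ‖V₁ x‖]
        have hV0' : ‖V₁ x‖^2 = 0 := by nlinarith [sq_nonneg ‖U₁ x‖, sq_nonneg ‖V₁ x‖]
        constructor <;> [skip; skip]
        · simpa using pow_eq_zero_iff two_ne_zero |>.mp (by simpa using hU0)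
        · simpa using pow_eq_zero_iff two_ne_zero |>.mp (by simpa using hV0')
      have hWzero : ∀ x ∈ Set.Ioo (0:ℝ) N, W₁ x = 0 := by
        intro x hx
        have hxL : -L ≤ x := by linarith [hx.1]
        have hev : V₁ =ᶠ[nhds x] (fun _ => (0:ℂ)) := by
          filter_upwards [isOpen_Ioo.mem_nhds hx] with y hy
          exact (hzero y hy).2
        have hd0 : HasDerivAt V₁ 0 x := (hasDerivAt_const x (0:ℂ)).congr_of_eventuallyEq hev
        have := (hVd x hxL).unique hd0
        have hu0 := (hzero x hx).1
        rw [hu0] at this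
        simpa using this
      have hne : (nhdsWithin (0:ℝ) (Set.Ioo 0 N)).NeBot := left_nhdsWithin_Ioo_neBot hN
      have ht1 : Filter.Tendsto W₁ (nhdsWithin (0:ℝ) (Set.Ioo 0 N)) (nhds (W₁ 0)) :=
        ((hWd 0 (by linarith)).continuousAt.tendsto).mono_left nhdsWithin_le_nhds
      have ht2 : Filter.Tendsto W₁ (nhdsWithin (0:ℝ) (Set.Ioo 0 N)) (nhds 0) := by
        apply Filter.Tendsto.congr' _ tendsto_const_nhds
        filter_upwards [self_mem_nhdsWithin] with y hy
        exact (hWzero y hy).symm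
      have hW00 : W₁ 0 = 0 := tendsto_nhds_unique ht1 ht2
      rw [hW0] at hW00
      simp [Complex.ext_iff] at hW00
      exact hδ0 hW00
    obtain ⟨x₀, hx₀mem, hx₀pos⟩ := hx0
    have hcont : ContinuousAt g x₀ := hgc x₀ (by linarith [hx₀mem.1])
    have hev : {y | 0 < g y} ∈ nhds x₀ := by
      have := hcont.preimage_mem_nhds (Ioi_mem_nhds hx₀pos)
      exact this
    obtain ⟨ε, hε, hball⟩ := Metric.mem_nhds_iff.mp
      (Filter.inter_mem hev (isOpen_Ioo.mem_nhds hx₀mem))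
    have hsub : Set.Ioo (x₀ - ε) (x₀ + ε) ⊆ Function.support g ∩ Set.Ioc 0 N := by
      intro y hy
      have hy' : y ∈ Metric.ball x₀ ε := by
        rw [Metric.mem_ball, Real.dist_eq, abs_lt]
        constructor <;> [linarith [hy.1]; linarith [hy.2]]
      have := hball hy'
      exact ⟨(this.1).ne', Set.Ioo_subset_Ioc_self this.2⟩
    calc (0:ENNReal) < MeasureTheory.volume (Set.Ioo (x₀ - ε) (x₀ + ε)) := by
            rw [Real.volume_Ioo]
            simp only [ENNReal.ofReal_pos]
            linarith
      _ ≤ _ := MeasureTheory.measure_mono hsub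
  have hneg : ∀ N : ℝ, 0 < N → F N < 0 := by
    intro N hN
    have := energy N hN
    nlinarith [hpos N hN]
  refine ⟨hF0, energy, hneg, ?_⟩
  -- non-convergence
  intro hcv
  have hIm : Filter.Tendsto F Filter.atTop (nhds 0) := by
    have := (Complex.continuous_im.tendsto (0:ℂ)).comp hcv
    exact this
  have h1 : F 1 < 0 := hneg 1 one_pos
  have hmono : ∀ N : ℝ, 1 ≤ N → F N ≤ F 1 := by
    intro N hN1
    have hadd : (∫ x in (0:ℝ)..1, g x) + ∫ x in (1:ℝ)..N, g x = ∫ x in (0:ℝ)..N, g x :=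
      intervalIntegral.integral_add_adjacent_intervals
        (hgint 0 1 le_rfl zero_le_one) (hgint 1 N zero_le_one (by linarith))
    have htail : 0 ≤ ∫ x in (1:ℝ)..N, g x :=
      intervalIntegral.integral_nonneg hN1 (fun u _ => hgnn u)
    have e1 := energy 1 one_pos
    have eN := energy N (by linarith)
    nlinarith [mul_nonneg hν.le htail]
  have hev : ∀ᶠ N in Filter.atTop, F 1 < F N :=
    hIm.eventually (eventually_gt_nhds h1)
  obtain ⟨N, hN1, hNlt⟩ := (hev.and (Filter.eventually_ge_atTop 1)).exists
  exact absurd (hmono N hNlt) (not_le.mpr hN1)
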